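/- Let E be a complex Hilbert space with inner product ⟪·,·⟫ (conjugate-linear in the first argument), and let U : ℝ → (E →ₗᵢ[ℂ] E) be a one-parameter group of linear isometries (U_0 = id, U_{s+t} = U_s ∘ U_t). Let ω ∈ ℝ, let A ∈ E with t ↦ U_t A continuous, and let Q : Fin n → E satisfy U_t (Q j) = exp(iω_j t) • Q j for all t ∈ ℝ and all j, with frequencies ω_j ∈ ℝ. Then for every T > 0 and every choice of coefficients α : Fin n → ℂ: (1/T²)∫_{t₁∈[0,T]}∫_{t₂∈[0,T]} exp(iω(t₁−t₂))·⟪U_{t₁}A, U_{t₂}A⟫ dt₂ dt₁ ≥ ∑_j 2·Re[ α_j · ((1/T)∫_{t∈[0,T]} exp(i(ω−ω_j)t) dt) · ⟪A, Q j⟫ ] − ∑_{j,l} Re[ conj(α_j)·α_l·⟪Q j, Q l⟫ ]. (This is the paper's inequality (cond), obtained from nonnegativity of the norm of O_A(ω) = (1/T)∫_0^T e^{−iωt}U_tA dt − ∑_j α_j Q_j, before optimizing over α.) -/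

import Mathlib

open MeasureTheory

private lemma inner_integral_left {α : Type*} [MeasurableSpace α] {μ : Measure α}
    {E : Type*} [NormedAddCommGroup E] [InnerProductSpace ℂ E] [CompleteSpace E]
    {f : α → E} (hf : Integrable f μ) (c : E) :
    (inner ℂ (∫ x, f x ∂μ) c : ℂ) = ∫ x, (inner ℂ (f x) c : ℂ) ∂μ := by
  rw [← inner_conj_symm, ← integral_inner hf, ← integral_conj]
  simp [inner_conj_symm]

/-- **Pre-optimization Mazur-type inequality** (Eq. (cond) of the paper): for a
one-parameter isometry group `U` (abstract Heisenberg evolution), dynamical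
symmetries `Q j` of frequencies `ω_j`, and any coefficients `α j`, nonnegativity of
the squared norm of `O_A(ω) = (1/T)∫₀ᵀ e^{−iωt} U_t A dt − ∑_j α_j Q_j` gives
`(1/T²)∫₀ᵀ∫₀ᵀ e^{iω(t₁−t₂)} ⟪U t₁ A, U t₂ A⟫
  ≥ ∑_j 2 Re[α_j ((1/T)∫₀ᵀ e^{i(ω−ω_j)t} dt) ⟪A, Q j⟫] − ∑_{j,l} Re[conj(α_j) α_l ⟪Q j, Q l⟫]`. -/
theorem mazur_inequality_pre_optimization
    (E : Type*) [NormedAddCommGroup E] [InnerProductSpace ℂ E] [CompleteSpace E]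
    (U : ℝ → (E →ₗᵢ[ℂ] E))
    (hU0 : U 0 = LinearIsometry.id)
    (hUadd : ∀ s t : ℝ, U (s + t) = (U s).comp (U t))
    (ω : ℝ) (A : E) (hA : Continuous fun t : ℝ => U t A)
    (n : ℕ) (Q : Fin n → E) (ωj : Fin n → ℝ)
    (hQ : ∀ (t : ℝ) (j : Fin n), U t (Q j) = Complex.exp (Complex.I * ωj j * t) • Q j)
    (T : ℝ) (hT : 0 < T) (α : Fin n → ℂ) :
    (((T : ℂ) ^ 2)⁻¹ * ∫ t₁ in Set.Icc (0 : ℝ) T, ∫ t₂ in Set.Icc (0 : ℝ) T,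
          Complex.exp (Complex.I * ω * ((t₁ : ℂ) - (t₂ : ℂ))) *
            (inner ℂ (U t₁ A) (U t₂ A) : ℂ)).im = 0 ∧
    (∑ j : Fin n, 2 * (α j * ((T : ℂ)⁻¹ *
            ∫ t in Set.Icc (0 : ℝ) T, Complex.exp (Complex.I * (ω - ωj j) * t)) *
          (inner ℂ A (Q j) : ℂ)).re) -
        ∑ j : Fin n, ∑ l : Fin n,
          ((starRingEnd ℂ) (α j) * α l * (inner ℂ (Q j) (Q l) : ℂ)).re ≤
      (((T : ℂ) ^ 2)⁻¹ * ∫ t₁ in Set.Icc (0 : ℝ) T, ∫ t₂ in Set.Icc (0 : ℝ) T,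
          Complex.exp (Complex.I * ω * ((t₁ : ℂ) - (t₂ : ℂ))) *
            (inner ℂ (U t₁ A) (U t₂ A) : ℂ)).re := by
  set μ : Measure ℝ := volume.restrict (Set.Icc (0 : ℝ) T) with hμ
  set f : ℝ → E := fun t => Complex.exp (-(Complex.I * ω * t)) • U t A with hfdef
  have hfc : Continuous f := by
    apply Continuous.smul _ hA
    exact Complex.continuous_exp.comp (by continuity)
  have hfi : Integrable f μ := hfc.integrableOn_Icc
  set B : E := ∫ t, f t ∂μ with hB
  have hff : ∀ t₁ t₂ : ℝ, (inner ℂ (f t₁) (f t₂) : ℂ) =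
      Complex.exp (Complex.I * ω * ((t₁ : ℂ) - (t₂ : ℂ))) * (inner ℂ (U t₁ A) (U t₂ A) : ℂ) := by
    intro t₁ t₂
    have hc : (starRingEnd ℂ) (Complex.exp (-(Complex.I * ω * t₁)))
        = Complex.exp (Complex.I * ω * t₁) := by
      rw [← Complex.exp_conj]
      simp [Complex.conj_ofReal]
    simp only [hfdef, inner_smul_left, inner_smul_right, hc, ← mul_assoc, ← Complex.exp_add]
    have harg : Complex.exp (-(Complex.I * ω * t₂) + Complex.I * ω * t₁)
        = Complex.exp (Complex.I * ω * ((t₁ : ℂ) - (t₂ : ℂ))) := by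
      congr 1; ring
    rw [harg]
  have hBB : (inner ℂ B B : ℂ) = ∫ t₁ in Set.Icc (0 : ℝ) T, ∫ t₂ in Set.Icc (0 : ℝ) T,
      Complex.exp (Complex.I * ω * ((t₁ : ℂ) - (t₂ : ℂ))) * (inner ℂ (U t₁ A) (U t₂ A) : ℂ) := by
    rw [hB, inner_integral_left hfi]
    refine integral_congr_ae (Filter.Eventually.of_forall fun t₁ => ?_)
    show (inner ℂ (f t₁) (∫ t, f t ∂μ) : ℂ) = ∫ t₂ in Set.Icc (0 : ℝ) T,
      Complex.exp (Complex.I * ω * ((t₁ : ℂ) - (t₂ : ℂ))) * (inner ℂ (U t₁ A) (U t₂ A) : ℂ)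
    rw [← integral_inner hfi]
    exact integral_congr_ae (Filter.Eventually.of_forall fun t₂ => hff t₁ t₂)
  have hUQ : ∀ (t : ℝ) (j : Fin n), (inner ℂ (U t A) (Q j) : ℂ) =
      Complex.exp (-(Complex.I * ωj j * t)) * (inner ℂ A (Q j) : ℂ) := by
    intro t j
    have h1 : (inner ℂ (U t A) (U t (Q j)) : ℂ) = inner ℂ A (Q j) := (U t).inner_map_map A (Q j)
    rw [hQ t j, inner_smul_right] at h1
    rw [← h1, Complex.exp_neg]
    field_simp [Complex.exp_ne_zero]
  have hBQ : ∀ j : Fin n, (inner ℂ B (Q j) : ℂ) =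
      (∫ t in Set.Icc (0 : ℝ) T, Complex.exp (Complex.I * (ω - ωj j) * t)) *
        (inner ℂ A (Q j) : ℂ) := by
    intro j
    rw [hB, inner_integral_left hfi]
    have hptw : ∀ t : ℝ, (inner ℂ (f t) (Q j) : ℂ) =
        Complex.exp (Complex.I * (ω - ωj j) * t) * (inner ℂ A (Q j) : ℂ) := by
      intro t
      have hc : (starRingEnd ℂ) (Complex.exp (-(Complex.I * ω * t)))
          = Complex.exp (Complex.I * ω * t) := by
        rw [← Complex.exp_conj]
        simp [Complex.conj_ofReal]
      simp only [hfdef, inner_smul_left, hc, hUQ t j, ← mul_assoc, ← Complex.exp_add]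
      have harg : Complex.exp (Complex.I * ω * t + -(Complex.I * ωj j * t))
          = Complex.exp (Complex.I * ((ω : ℂ) - (ωj j : ℂ)) * t) := by
        congr 1; ring
      rw [harg]
    calc (∫ t, (inner ℂ (f t) (Q j) : ℂ) ∂μ)
        = ∫ t, Complex.exp (Complex.I * (ω - ωj j) * t) * (inner ℂ A (Q j) : ℂ) ∂μ :=
          integral_congr_ae (Filter.Eventually.of_forall fun t => hptw t)
      _ = (∫ t, Complex.exp (Complex.I * (ω - ωj j) * t) ∂μ) * (inner ℂ A (Q j) : ℂ) := by
          simpa [smul_eq_mul] using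
            integral_smul_const (μ := μ) (f := fun t => Complex.exp (Complex.I * (ω - ωj j) * t))
              ((inner ℂ A (Q j) : ℂ))
  set a : E := (T : ℂ)⁻¹ • B with ha
  set S : E := ∑ j : Fin n, α j • Q j with hS
  have hTinv : (starRingEnd ℂ) ((T : ℂ)⁻¹) = (T : ℂ)⁻¹ := by
    simp [map_inv₀, Complex.conj_ofReal]
  have haa : (inner ℂ a a : ℂ) = ((T : ℂ) ^ 2)⁻¹ * (inner ℂ B B : ℂ) := by
    rw [ha, inner_smul_left, inner_smul_right, hTinv]
    ring
  have key1 : (((T : ℂ) ^ 2)⁻¹ * ∫ t₁ in Set.Icc (0 : ℝ) T, ∫ t₂ in Set.Icc (0 : ℝ) T,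
      Complex.exp (Complex.I * ω * ((t₁ : ℂ) - (t₂ : ℂ))) * (inner ℂ (U t₁ A) (U t₂ A) : ℂ))
      = (inner ℂ a a : ℂ) := by rw [haa, hBB]
  constructor
  · rw [key1]; exact inner_self_im (𝕜 := ℂ) a
  · have haS : (inner ℂ a S : ℂ) = ∑ j : Fin n, α j * ((T : ℂ)⁻¹ *
        ∫ t in Set.Icc (0 : ℝ) T, Complex.exp (Complex.I * (ω - ωj j) * t)) *
        (inner ℂ A (Q j) : ℂ) := by
      rw [hS, inner_sum]
      refine Finset.sum_congr rfl fun j _ => ?_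
      rw [inner_smul_right, ha, inner_smul_left, hTinv, hBQ j]
      ring
    have hSS : (inner ℂ S S : ℂ) = ∑ j : Fin n, ∑ l : Fin n,
        (starRingEnd ℂ) (α j) * α l * (inner ℂ (Q j) (Q l) : ℂ) := by
      rw [hS, sum_inner]
      refine Finset.sum_congr rfl fun j _ => ?_
      rw [inner_sum]
      refine Finset.sum_congr rfl fun l _ => ?_
      rw [inner_smul_left, inner_smul_right]; ring
    have hnn : (0 : ℝ) ≤ ‖a - S‖ ^ 2 := sq_nonneg _
    rw [@norm_sub_sq ℂ] at hnn
    have hre1 : ‖a‖ ^ 2 = (inner ℂ a a : ℂ).re := by simpa using (inner_self_eq_norm_sq (𝕜 := ℂ) a).symm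
    have hre2 : ‖S‖ ^ 2 = (inner ℂ S S : ℂ).re := by simpa using (inner_self_eq_norm_sq (𝕜 := ℂ) S).symm
    rw [key1]
    have hkey2 : 2 * (inner ℂ a S : ℂ).re - (inner ℂ S S : ℂ).re ≤ (inner ℂ a a : ℂ).re := by
      simp only [RCLike.re_to_complex] at hnn
      rw [hre1, hre2] at hnn
      linarith
    calc (∑ j : Fin n, 2 * (α j * ((T : ℂ)⁻¹ *
            ∫ t in Set.Icc (0 : ℝ) T, Complex.exp (Complex.I * (ω - ωj j) * t)) *
          (inner ℂ A (Q j) : ℂ)).re) -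
        ∑ j : Fin n, ∑ l : Fin n,
          ((starRingEnd ℂ) (α j) * α l * (inner ℂ (Q j) (Q l) : ℂ)).re
        = 2 * (inner ℂ a S : ℂ).re - (inner ℂ S S : ℂ).re := by
          rw [haS, hSS, Complex.re_sum, Complex.re_sum, Finset.mul_sum]
          congr 1
          refine Finset.sum_congr rfl fun j _ => ?_
          exact (Complex.re_sum _ _).symm
      _ ≤ (inner ℂ a a : ℂ).re := hkey2
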